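/- The post-intervention distribution given by the truncated factorization formula is a probability distribution: for every node X and every value x : D X, the sum over all full assignments a with a X = x of ∏_{i ≠ X} cpt i (a restricted to pa i) (a i) equals 1. -/

import Mathlib

theorem bn_key {n : ℕ} (D : Fin n → Type)
    [∀ i, Fintype (D i)] [∀ i, Nonempty (D i)] [∀ i, DecidableEq (D i)]
    (pa : Fin n → Finset (Fin n))
    (hpa : ∀ i : Fin n, ∀ j ∈ pa i, j < i)
    (cpt : ∀ i : Fin n, ((j : {x // x ∈ pa i}) → D j.1) → D i → ℝ)
    (hsum : ∀ i p, ∑ x : D i, cpt i p x = 1)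
    (T : Finset (Fin n)) :
    ∑ a : ∀ i, D i, ∏ i ∈ T, cpt i (fun j => a j.1) (a i)
      = ∏ i ∈ Tᶜ, (Fintype.card (D i) : ℝ) := by
  induction T using Finset.strongInduction with
  | _ T ih =>
    rcases T.eq_empty_or_nonempty with rfl | hT
    · simp [Fintype.card_pi]
    · set m := T.max' hT with hm
      have hmT : m ∈ T := T.max'_mem hT
      set e := Equiv.piSplitAt m D with he
      have hsymm_ne : ∀ (y : D m) (b : ∀ j : {j // j ≠ m}, D j.1) (j : Fin n) (h : j ≠ m),
          e.symm (y, b) j = b ⟨j, h⟩ := by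
        intro y b j h
        simp [he, Equiv.piSplitAt, dif_neg h]
      have hsymm_eq : ∀ (y : D m) (b : ∀ j : {j // j ≠ m}, D j.1),
          e.symm (y, b) m = y := by
        intro y b
        simp [he, Equiv.piSplitAt]
      have split : ∀ F : (∀ i, D i) → ℝ,
          ∑ a : ∀ i, D i, F a
            = ∑ b : ∀ j : {j // j ≠ m}, D j.1, ∑ y : D m, F (e.symm (y, b)) := by
        intro F
        rw [← Equiv.sum_comp e.symm F, Fintype.sum_prod_type, Finset.sum_comm]
      have hpar : ∀ i ∈ T, ∀ j ∈ pa i, j ≠ m := fun i hi j hj =>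
        ne_of_lt (lt_of_lt_of_le (hpa i j hj) (T.le_max' i hi))
      -- the product over `T.erase m` does not depend on the `m`-coordinate
      set G : (∀ i, D i) → ℝ := fun a => ∏ i ∈ T.erase m, cpt i (fun j => a j.1) (a i)
        with hG
      obtain ⟨y₀⟩ : Nonempty (D m) := inferInstance
      have hGindep : ∀ (y : D m) (b : ∀ j : {j // j ≠ m}, D j.1),
          G (e.symm (y, b)) = G (e.symm (y₀, b)) := by
        intro y b
        refine Finset.prod_congr rfl fun i hi => ?_
        have hiT : i ∈ T := (Finset.mem_erase.1 hi).2
        have hine : i ≠ m := (Finset.mem_erase.1 hi).1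
        have hfun : (fun j : {x // x ∈ pa i} => e.symm (y, b) j.1)
            = (fun j : {x // x ∈ pa i} => e.symm (y₀, b) j.1) := by
          funext j
          rw [hsymm_ne y b j.1 (hpar i hiT j.1 j.2), hsymm_ne y₀ b j.1 (hpar i hiT j.1 j.2)]
        rw [hfun, hsymm_ne y b i hine, hsymm_ne y₀ b i hine]
      -- parent function for m is independent of y
      have hPindep : ∀ (y : D m) (b : ∀ j : {j // j ≠ m}, D j.1),
          (fun j : {x // x ∈ pa m} => e.symm (y, b) j.1)
            = (fun j : {x // x ∈ pa m} => e.symm (y₀, b) j.1) := by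
        intro y b
        funext j
        rw [hsymm_ne y b j.1 (hpar m hmT j.1 j.2), hsymm_ne y₀ b j.1 (hpar m hmT j.1 j.2)]
      have key : ∑ a : ∀ i, D i, ∏ i ∈ T, cpt i (fun j => a j.1) (a i)
          = ∑ b : ∀ j : {j // j ≠ m}, D j.1, G (e.symm (y₀, b)) := by
        rw [split]
        refine Finset.sum_congr rfl fun b _ => ?_
        have : ∀ y : D m,
            (∏ i ∈ T, cpt i (fun j => e.symm (y, b) j.1) (e.symm (y, b) i))
              = G (e.symm (y₀, b))
                * cpt m (fun j => e.symm (y₀, b) j.1) y := by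
          intro y
          rw [← Finset.mul_prod_erase T _ hmT]
          rw [mul_comm]
          congr 1
          · exact hGindep y b
          · rw [hPindep y b, hsymm_eq y b]
        simp_rw [this, ← Finset.mul_sum, hsum m, mul_one]
      have key2 : ∑ a : ∀ i, D i, G a
          = (Fintype.card (D m) : ℝ) * ∑ b : ∀ j : {j // j ≠ m}, D j.1, G (e.symm (y₀, b)) := by
        rw [split G, Finset.mul_sum]
        refine Finset.sum_congr rfl fun b _ => ?_
        rw [Finset.sum_congr rfl fun y _ => hGindep y b]
        simp [Finset.sum_const, mul_comm]
      have ihe : ∑ a : ∀ i, D i, G a = ∏ i ∈ (T.erase m)ᶜ, (Fintype.card (D i) : ℝ) :=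
        ih (T.erase m) (Finset.erase_ssubset hmT)
      have hcompl : (T.erase m)ᶜ = insert m Tᶜ := by
        ext j
        simp [Finset.mem_erase, Finset.mem_compl, or_iff_not_imp_left]
      have hmc : m ∉ Tᶜ := by simpa using hmT
      have hcard : (Fintype.card (D m) : ℝ) ≠ 0 := by
        exact_mod_cast Fintype.card_ne_zero
      rw [key]
      have := key2.symm.trans ihe
      rw [hcompl, Finset.prod_insert hmc] at this
      have := mul_left_cancel₀ hcard this
      linarith [this]


/-- The post-intervention distribution given by the truncated factorization
formula is a probability distribution: for every node `X` and every value
`x : D X`, the sum over all full assignments `a` with `a X = x` of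
`∏_{i ≠ X} cpt i (a restricted to pa i) (a i)` equals `1`. -/
theorem bn_truncated_sums_to_one {n : ℕ} (D : Fin n → Type)
    [∀ i, Fintype (D i)] [∀ i, Nonempty (D i)] [∀ i, DecidableEq (D i)]
    (pa : Fin n → Finset (Fin n))
    (hpa : ∀ i : Fin n, ∀ j ∈ pa i, j < i)
    (cpt : ∀ i : Fin n, ((j : {x // x ∈ pa i}) → D j.1) → D i → ℝ)
    (hnn : ∀ i p x, 0 ≤ cpt i p x)
    (hsum : ∀ i p, ∑ x : D i, cpt i p x = 1)
    (X : Fin n) (x : D X) :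
    ∑ a ∈ Finset.univ.filter (fun a : ∀ i, D i => a X = x),
      ∏ i ∈ Finset.univ.erase X, cpt i (fun j => a j.1) (a i) = 1 := by
  classical
  -- modified cpt: deterministic at X
  set cpt' : ∀ i : Fin n, ((j : {x // x ∈ pa i}) → D j.1) → D i → ℝ :=
    fun i p y => if h : i = X then (if h ▸ y = x then 1 else 0) else cpt i p y with hcpt'
  have hsum' : ∀ i p, ∑ y : D i, cpt' i p y = 1 := by
    intro i p
    by_cases h : i = X
    · subst h
      simp [hcpt']
    · simp [hcpt', h, hsum i p]
  have hk := bn_key D pa hpa cpt' hsum' Finset.univ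
  rw [Finset.compl_univ, Finset.prod_empty] at hk
  rw [← hk]
  rw [Finset.sum_filter]
  refine Finset.sum_congr rfl fun a _ => ?_
  rw [← Finset.mul_prod_erase Finset.univ _ (Finset.mem_univ X)]
  have h1 : cpt' X (fun j => a j.1) (a X) = if a X = x then 1 else 0 := by
    simp [hcpt']
  have h2 : ∏ i ∈ Finset.univ.erase X, cpt' i (fun j => a j.1) (a i)
      = ∏ i ∈ Finset.univ.erase X, cpt i (fun j => a j.1) (a i) := by
    refine Finset.prod_congr rfl fun i hi => ?_
    simp [hcpt', (Finset.mem_erase.1 hi).1]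
  rw [h1, h2]
  split_ifs <;> simp
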